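/- arXiv:2006.15232 — 4 statements merged into one kernel-verified Lean document; each statement's English description precedes it below -/
import Mathlib

section
/- Let (M, θ) be a graded von Neumann algebra, where θ is an involutive *-automorphism of M. Suppose M is central, i.e., Z(M) ∩ M⁽⁰⁾ = ℂ·1, where M⁽⁰⁾ = {x ∈ M : θ(x) = x} is the even part. Then either Z(M) = ℂ·1, or there exists a self-adjoint unitary b ∈ Z(M) with θ(b) = −b such that Z(M) ∩ M⁽¹⁾ = ℂ·b, where M⁽¹⁾ = {x ∈ M : θ(x) = −x}. -/
set_option maxHeartbeats 1000000
set_option synthInstance.maxHeartbeats 400000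

open scoped InnerProductSpace

/-- Let `(M, θ)` be a graded von Neumann algebra with `θ` an involutive
*-automorphism. If `M` is central (`Z(M) ∩ M⁽⁰⁾ = ℂ·1`), then either `Z(M) = ℂ·1`, or there
is a self-adjoint unitary `b ∈ Z(M)` with `θ(b) = −b` such that `Z(M) ∩ M⁽¹⁾ = ℂ·b`. -/
theorem stmt3 {H : Type*} [NormedAddCommGroup H] [InnerProductSpace ℂ H] [CompleteSpace H]
    (M : VonNeumannAlgebra H)
    (θ : ↥M.toStarSubalgebra ≃⋆ₐ[ℂ] ↥M.toStarSubalgebra)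
    (hθinv : ∀ x, θ (θ x) = x)
    (hcentral : ∀ z : ↥M.toStarSubalgebra,
      (∀ x, z * x = x * z) → θ z = z → ∃ c : ℂ, z = c • 1) :
    (∀ z : ↥M.toStarSubalgebra, (∀ x, z * x = x * z) → ∃ c : ℂ, z = c • 1) ∨
    (∃ b : ↥M.toStarSubalgebra, (∀ x, b * x = x * b) ∧ IsSelfAdjoint b ∧ b * b = 1 ∧
      θ b = -b ∧
      ∀ z : ↥M.toStarSubalgebra, (∀ x, z * x = x * z) → θ z = -z → ∃ c : ℂ, z = c • b) := by
  classical
  set A := ↥M.toStarSubalgebra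
  -- θ preserves centrality
  have hθcentral : ∀ z : A, (∀ x, z * x = x * z) → (∀ x, θ z * x = x * θ z) := by
    intro z hz x
    have : θ z * θ (θ x) = θ (θ x) * θ z := by
      rw [← map_mul, ← map_mul, hz]
    rwa [hθinv] at this
  by_cases hall : ∀ z : A, (∀ x, z * x = x * z) → ∃ c : ℂ, z = c • 1
  · exact Or.inl hall
  right
  push_neg at hall
  obtain ⟨z, hz, hznot⟩ := hall
  -- odd part of z
  set w : A := z - θ z with hw
  have hwcentral : ∀ x, w * x = x * w := by
    intro x
    simp only [hw, sub_mul, mul_sub, hz x, hθcentral z hz x]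
  have hwodd : θ w = -w := by
    simp only [hw, map_sub, hθinv, neg_sub]
  have hwne : w ≠ 0 := by
    intro h0
    have hθz : θ z = z := by
      have := sub_eq_zero.mp h0
      exact this.symm
    obtain ⟨c, hcz⟩ := hcentral z hz hθz; exact hznot c hcz
  -- find a nonzero self-adjoint central odd element
  have key : ∃ a : A, a ≠ 0 ∧ IsSelfAdjoint a ∧ (∀ x, a * x = x * a) ∧ θ a = -a := by
    have hstarw_central : ∀ x, star w * x = x * star w := by
      intro x
      have := congrArg star (hwcentral (star x))
      rw [star_mul, star_mul, star_star] at this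
      exact this.symm
    have hstarw_odd : θ (star w) = -star w := by
      rw [map_star, hwodd, star_neg]
    by_cases h1 : w + star w ≠ 0
    · refine ⟨w + star w, h1, ?_, ?_, ?_⟩
      · show star (w + star w) = w + star w
        rw [star_add, star_star, add_comm]
      · intro x; simp [add_mul, mul_add, hwcentral x, hstarw_central x]
      · simp [map_add, hwodd, hstarw_odd]; abel
    · push_neg at h1
      have hws : star w = -w := by rw [add_comm] at h1; exact eq_neg_of_add_eq_zero_left h1
      refine ⟨Complex.I • w, ?_, ?_, ?_, ?_⟩
      · simp [smul_eq_zero, Complex.I_ne_zero, hwne]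
      · show star (Complex.I • w) = Complex.I • w
        rw [star_smul, hws, Complex.star_def, Complex.conj_I, neg_smul, smul_neg, neg_neg]
      · intro x; simp [smul_mul_assoc, mul_smul_comm, hwcentral x]
      · rw [map_smul, hwodd, smul_neg]
  obtain ⟨a, hane, hasa, hacentral, haodd⟩ := key
  -- a² is central and even, hence scalar
  have ha2central : ∀ x, (a * a) * x = x * (a * a) := by
    intro x
    rw [mul_assoc, hacentral x, ← mul_assoc, hacentral x, mul_assoc]
  have ha2even : θ (a * a) = a * a := by
    rw [map_mul, haodd, neg_mul_neg]
  obtain ⟨c, hc⟩ := hcentral (a * a) ha2central ha2even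
  -- compute c via a vector
  have hAsa : ContinuousLinearMap.adjoint (a : H →L[ℂ] H) = (a : H →L[ℂ] H) := by
    rw [← ContinuousLinearMap.star_eq_adjoint]
    exact congrArg Subtype.val hasa
  obtain ⟨v, hv⟩ : ∃ v : H, (a : H →L[ℂ] H) v ≠ 0 := by
    by_contra h
    push_neg at h
    apply hane
    ext1
    exact ContinuousLinearMap.ext fun v => h v
  have hvne : v ≠ 0 := by
    intro h; apply hv; simp [h]
  -- inner product computation
  have hinner : (c : ℂ) * (‖v‖ : ℂ)^2 = (‖(a : H →L[ℂ] H) v‖ : ℂ)^2 := by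
    have h1 : ⟪v, ((a * a : A) : H →L[ℂ] H) v⟫_ℂ = ⟪(a : H →L[ℂ] H) v, (a : H →L[ℂ] H) v⟫_ℂ := by
      have hcoe : ((a * a : A) : H →L[ℂ] H) v = (a : H →L[ℂ] H) ((a : H →L[ℂ] H) v) := rfl
      rw [hcoe, ← ContinuousLinearMap.adjoint_inner_left (a : H →L[ℂ] H), hAsa]
    have h2 : ((a * a : A) : H →L[ℂ] H) v = c • v := by
      rw [hc]
      rfl
    rw [h2] at h1
    rw [inner_smul_right, inner_self_eq_norm_sq_to_K, inner_self_eq_norm_sq_to_K] at h1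
    exact h1
  set r : ℝ := ‖(a : H →L[ℂ] H) v‖ / ‖v‖ with hr
  have hrpos : 0 < r := div_pos (norm_pos_iff.mpr hv) (norm_pos_iff.mpr hvne)
  have hcr : c = (r : ℂ)^2 := by
    have hvnorm : (‖v‖ : ℂ) ≠ 0 := by
      exact_mod_cast norm_ne_zero_iff.mpr hvne
    rw [hr]
    push_cast
    field_simp
    linear_combination hinner
  set b : A := (r⁻¹ : ℂ) • a with hb
  have hbcentral : ∀ x, b * x = x * b := by
    intro x
    rw [hb, smul_mul_assoc, mul_smul_comm, hacentral x]
  have hbsa : IsSelfAdjoint b := by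
    show star b = b
    rw [hb, star_smul, hasa.star_eq]
    congr 1
    simp [Complex.star_def, ← Complex.ofReal_inv]
  have hbsq : b * b = 1 := by
    rw [hb, smul_mul_assoc, mul_smul_comm, smul_smul, hc, hcr, smul_smul]
    rw [← Complex.ofReal_inv, ← Complex.ofReal_pow, ← Complex.ofReal_mul, ← Complex.ofReal_mul]
    have : r⁻¹ * r⁻¹ * r^2 = 1 := by
      field_simp
    rw [this]
    simp
  have hbodd : θ b = -b := by
    rw [hb, map_smul, haodd, smul_neg]
  refine ⟨b, hbcentral, hbsa, hbsq, hbodd, ?_⟩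
  intro z hz hzodd
  have hzbcentral : ∀ x, (z * b) * x = x * (z * b) := by
    intro x
    rw [mul_assoc, hbcentral x, ← mul_assoc, hz x, mul_assoc]
  have hzbeven : θ (z * b) = z * b := by
    rw [map_mul, hzodd, hbodd, neg_mul_neg]
  obtain ⟨d, hd⟩ := hcentral (z * b) hzbcentral hzbeven
  refine ⟨d, ?_⟩
  calc z = z * (b * b) := by rw [hbsq, mul_one]
    _ = (z * b) * b := by rw [mul_assoc]
    _ = d • b := by rw [hd, smul_mul_assoc, one_mul]
end

section
/- Let M ⊆ B(H) be a von Neumann algebra spatially graded by a self-adjoint unitary Γ on H (i.e., Ad_Γ(M) = M), and suppose M is central (Z(M) ∩ M⁽⁰⁾ = ℂ·1 for the grading θ = Ad_Γ|_M). If M is not a factor, then M ∩ M′Γ = {0}, where M′Γ = {x′Γ : x′ ∈ M′}. -/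
/-- Let `M ⊆ B(H)` be a von Neumann algebra spatially graded by a
self-adjoint unitary `Γ` (so `Ad_Γ(M) = M`), and suppose `M` is central
(`Z(M) ∩ M⁽⁰⁾ = ℂ·1`). If `M` is not a factor, then `M ∩ M′Γ = {0}`. -/
theorem stmt4 {H : Type*} [NormedAddCommGroup H] [InnerProductSpace ℂ H] [CompleteSpace H]
    (M : VonNeumannAlgebra H) (Γ : H →L[ℂ] H)
    (hΓsa : IsSelfAdjoint Γ) (hΓ2 : Γ * Γ = 1)
    (hgrade : ∀ x ∈ M, Γ * x * Γ ∈ M)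
    (hcentral : ∀ z ∈ M, (∀ y ∈ M, z * y = y * z) → Γ * z * Γ = z →
      ∃ c : ℂ, z = c • (1 : H →L[ℂ] H))
    (hnotfactor : ∃ z ∈ M, (∀ y ∈ M, z * y = y * z) ∧
      ¬ ∃ c : ℂ, z = c • (1 : H →L[ℂ] H)) :
    ∀ a ∈ M, (∃ x', (∀ y ∈ M, x' * y = y * x') ∧ a = x' * Γ) → a = 0 := by
  obtain ⟨z, hzM, hzc, hzns⟩ := hnotfactor
  -- z' = ΓzΓ is central in M
  have hz'M : Γ * z * Γ ∈ M := hgrade z hzM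
  have hstarΓ : star Γ = Γ := hΓsa
  have hz'c : ∀ y ∈ M, (Γ * z * Γ) * y = y * (Γ * z * Γ) := by
    intro y hyM
    have hy' : Γ * y * Γ ∈ M := hgrade y hyM
    have h1 : z * (Γ * y * Γ) = (Γ * y * Γ) * z := hzc _ hy'
    calc (Γ * z * Γ) * y = Γ * z * (Γ * y * Γ) * Γ := by
          rw [show Γ * z * (Γ * y * Γ) * Γ = Γ * z * Γ * y * (Γ * Γ) by noncomm_ring, hΓ2, mul_one]
      _ = Γ * ((Γ * y * Γ) * z) * Γ := by rw [show Γ * z * (Γ * y * Γ) * Γ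
            = Γ * (z * (Γ * y * Γ)) * Γ by noncomm_ring, h1]
      _ = y * (Γ * z * Γ) := by
          rw [show Γ * ((Γ * y * Γ) * z) * Γ = (Γ * Γ) * y * (Γ * z * Γ) by noncomm_ring, hΓ2, one_mul]
  set w : H →L[ℂ] H := z - Γ * z * Γ with hw
  have hwM : w ∈ M := sub_mem hzM hz'M
  have hwc : ∀ y ∈ M, w * y = y * w := by
    intro y hy
    simp only [hw, sub_mul, mul_sub, hzc y hy, hz'c y hy]
  have hwodd : Γ * w * Γ = -w := by
    have : Γ * w * Γ = Γ * z * Γ - Γ * (Γ * z * Γ) * Γ := by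
      simp only [hw]; noncomm_ring
    rw [this, show Γ * (Γ * z * Γ) * Γ = (Γ * Γ) * z * (Γ * Γ) by noncomm_ring, hΓ2]
    simp [hw, neg_sub]
  have hwne : w ≠ 0 := by
    intro h0
    exact hzns (hcentral z hzM hzc
      (sub_eq_zero.mp (by rw [← hw]; exact h0)).symm)
  -- star w is central and odd
  have hwsM : star w ∈ M := star_mem hwM
  have hwsc : ∀ y ∈ M, star w * y = y * star w := by
    intro y hy
    have := congrArg star (hwc (star y) (star_mem hy))
    simpa [star_mul] using this.symm
  have hwsodd : Γ * star w * Γ = -(star w) := by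
    have := congrArg star hwodd
    simpa [star_mul, hstarΓ, mul_assoc] using this
  -- star w * w is even and central, hence scalar
  have hevenc : Γ * (star w * w) * Γ = star w * w := by
    calc Γ * (star w * w) * Γ = (Γ * star w * Γ) * (Γ * w * Γ) := by
          rw [show (Γ * star w * Γ) * (Γ * w * Γ) = Γ * star w * (Γ * Γ) * w * Γ by noncomm_ring, hΓ2]
          noncomm_ring
      _ = (-(star w)) * (-w) := by rw [hwsodd, hwodd]
      _ = star w * w := by noncomm_ring
  have hcc : ∀ y ∈ M, (star w * w) * y = y * (star w * w) := by
    intro y hy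
    calc (star w * w) * y = star w * (y * w) := by rw [mul_assoc, hwc y hy]
      _ = y * (star w * w) := by rw [← mul_assoc, hwsc y hy, mul_assoc]
  obtain ⟨c, hcw⟩ := hcentral (star w * w) (mul_mem hwsM hwM) hcc hevenc
  have hcne : c ≠ 0 := by
    intro h0
    apply hwne
    have hww : star w * w = 0 := by rw [hcw, h0, zero_smul]
    exact CStarRing.star_mul_self_eq_zero_iff w |>.mp hww
  -- main argument
  intro a haM ⟨x', hx'c, hax⟩
  have h1 : w * a = a * w := hwc a haM
  have h2 : a * w = -(w * a) := by
    calc a * w = x' * (Γ * w * Γ) * Γ := by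
          rw [hax, show x' * (Γ * w * Γ) * Γ = x' * Γ * w * (Γ * Γ) by noncomm_ring, hΓ2, mul_one]
      _ = -(x' * w * Γ) := by rw [hwodd]; noncomm_ring
      _ = -(w * (x' * Γ)) := by rw [hx'c w hwM]; noncomm_ring
      _ = -(w * a) := by rw [hax]
  have hwa : w * a = 0 := by
    have h3 : w * a = -(w * a) := h1.trans h2
    have h4 : (2 : ℂ) • (w * a) = 0 := by
      rw [two_smul]
      nth_rewrite 2 [h3]
      simp
    simpa using (smul_eq_zero.mp h4).resolve_left (by norm_num)
  have : c • a = 0 := by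
    calc c • a = (c • (1 : H →L[ℂ] H)) * a := by rw [smul_mul_assoc, one_mul]
      _ = (star w * w) * a := by rw [← hcw]
      _ = star w * (w * a) := by rw [mul_assoc]
      _ = 0 := by rw [hwa, mul_zero]
  exact (smul_eq_zero.mp this).resolve_left hcne
end

section
/- Let M ⊆ B(H) be a von Neumann algebra spatially graded by a self-adjoint unitary Γ with Ad_Γ(M) = M and Z(M) ∩ M⁽⁰⁾ = ℂ·1. If M ∩ M′Γ ≠ {0}, then there exists a self-adjoint unitary b ∈ M ∩ M′Γ with M ∩ M′Γ = ℂ·b. In particular, if Γ ∈ M then M ∩ M′Γ = ℂ·Γ. -/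
set_option maxHeartbeats 1600000 in
/-- Let `M ⊆ B(H)` be a von Neumann algebra spatially graded by a
self-adjoint unitary `Γ` with `Ad_Γ(M) = M` and `Z(M) ∩ M⁽⁰⁾ = ℂ·1.  If `M ∩ M′Γ ≠ {0}`,
then there is a self-adjoint unitary `b ∈ M ∩ M′Γ` with `M ∩ M′Γ = ℂ·b`.  In particular,
if `Γ ∈ M` then `M ∩ M′Γ = ℂ·Γ`. -/
theorem stmt5 {H : Type*} [NormedAddCommGroup H] [InnerProductSpace ℂ H] [CompleteSpace H]
    (M : VonNeumannAlgebra H) (Γ : H →L[ℂ] H)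
    (hΓsa : IsSelfAdjoint Γ) (hΓ2 : Γ * Γ = 1)
    (hgrade : ∀ x ∈ M, Γ * x * Γ ∈ M)
    (hcentral : ∀ z ∈ M, (∀ y ∈ M, z * y = y * z) → Γ * z * Γ = z →
      ∃ c : ℂ, z = c • (1 : H →L[ℂ] H))
    (hne : ∃ a, a ∈ M ∧ (∃ x', (∀ y ∈ M, x' * y = y * x') ∧ a = x' * Γ) ∧ a ≠ 0) :
    (∃ b, b ∈ M ∧ (∃ x', (∀ y ∈ M, x' * y = y * x') ∧ b = x' * Γ) ∧
      IsSelfAdjoint b ∧ b * b = 1 ∧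
      ∀ a, a ∈ M → (∃ x', (∀ y ∈ M, x' * y = y * x') ∧ a = x' * Γ) →
        ∃ c : ℂ, a = c • b) ∧
    (Γ ∈ M → ∀ a, a ∈ M → (∃ x', (∀ y ∈ M, x' * y = y * x') ∧ a = x' * Γ) →
      ∃ c : ℂ, a = c • Γ) := by
  classical
  obtain ⟨a0, ha0M, ⟨x0, hx0, ha0Γ⟩, ha0ne⟩ := hne
  -- a nonzero vector
  obtain ⟨v, hv⟩ : ∃ v, a0 v ≠ 0 := by
    by_contra h
    push_neg at h
    exact ha0ne (ContinuousLinearMap.ext fun w => by simpa using h w)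
  have hv0 : v ≠ 0 := fun h => hv (by simp [h])
  -- `C x` : x is in the commutant of M
  -- basic closure properties of the commutant
  have Cstar : ∀ x : H →L[ℂ] H, (∀ y ∈ M, x * y = y * x) →
      (∀ y ∈ M, star x * y = y * star x) := by
    intro x hx y hy
    have h := hx (star y) (star_mem hy)
    calc star x * y = star (star y * x) := by simp
      _ = star (x * star y) := by rw [h]
      _ = y * star x := by simp
  have Cmul : ∀ x z : H →L[ℂ] H, (∀ y ∈ M, x * y = y * x) → (∀ y ∈ M, z * y = y * z) →
      (∀ y ∈ M, (x * z) * y = y * (x * z)) := by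
    intro x z hx hz y hy
    rw [mul_assoc, hz y hy, ← mul_assoc, hx y hy, mul_assoc]
  have phimul : ∀ u w : H →L[ℂ] H, Γ * (u * w) * Γ = (Γ * u * Γ) * (Γ * w * Γ) := by
    intro u w
    calc Γ * (u * w) * Γ = Γ * (u * ((Γ * Γ) * w)) * Γ := by rw [hΓ2, one_mul]
      _ = (Γ * u * Γ) * (Γ * w * Γ) := by simp only [mul_assoc]
  have phiphi : ∀ u : H →L[ℂ] H, Γ * (Γ * u * Γ) * Γ = u := by
    intro u
    calc Γ * (Γ * u * Γ) * Γ = (Γ * Γ) * u * (Γ * Γ) := by simp only [mul_assoc]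
      _ = u := by rw [hΓ2, one_mul, mul_one]
  have CΓΓ : ∀ x : H →L[ℂ] H, (∀ y ∈ M, x * y = y * x) →
      (∀ y ∈ M, (Γ * x * Γ) * y = y * (Γ * x * Γ)) := by
    intro x hx y hy
    have h1 : x * (Γ * y * Γ) = (Γ * y * Γ) * x := hx _ (hgrade y hy)
    have h2 := congrArg (fun u => Γ * u * Γ) h1
    rw [phimul x (Γ * y * Γ), phimul (Γ * y * Γ) x, phiphi y] at h2
    exact h2
  have smulMem : ∀ (c : ℂ) (a : H →L[ℂ] H), a ∈ M → c • a ∈ M := by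
    intro c a ha
    exact M.toStarSubalgebra.smul_mem ha c
  -- key lemma: the square of a self-adjoint element of M ∩ M′Γ is a scalar
  have keyL : ∀ a x' : H →L[ℂ] H, a ∈ M → (∀ y ∈ M, x' * y = y * x') → a = x' * Γ →
      IsSelfAdjoint a → ∃ c : ℂ, a * a = c • (1 : H →L[ℂ] H) := by
    intro a x' haM hx' haΓ hsa
    have hx's := Cstar x' hx'
    have hstar : star a = Γ * star x' := by
      rw [haΓ, star_mul, hΓsa.star_eq]
    have e1 : star x' * (x' * Γ) = (x' * Γ) * star x' := by
      have := hx's a haM; rwa [haΓ] at this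
    have e2 : x' * (Γ * star x') = (Γ * star x') * x' := by
      have := hx' (star a) (star_mem haM); rwa [hstar] at this
    have comm : Γ * (star x' * x') = (star x' * x') * Γ := by
      calc Γ * (star x' * x') = (Γ * star x') * x' := by rw [mul_assoc]
        _ = x' * (Γ * star x') := e2.symm
        _ = (x' * Γ) * star x' := by rw [mul_assoc]
        _ = star x' * (x' * Γ) := e1.symm
        _ = (star x' * x') * Γ := by rw [mul_assoc]
    have hsq : a * a = star x' * x' := by
      have h1 : a * a = star a * a := by rw [hsa.star_eq]
      rw [h1, hstar, haΓ]
      calc (Γ * star x') * (x' * Γ) = Γ * ((star x' * x') * Γ) := by simp only [mul_assoc]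
        _ = Γ * (Γ * (star x' * x')) := by rw [← comm]
        _ = (Γ * Γ) * (star x' * x') := by rw [mul_assoc]
        _ = star x' * x' := by rw [hΓ2, one_mul]
    have hz : ∀ y ∈ M, (star x' * x') * y = y * (star x' * x') := Cmul _ _ hx's hx'
    have hmem : star x' * x' ∈ M := hsq ▸ mul_mem haM haM
    have hΓinv : Γ * (star x' * x') * Γ = star x' * x' := by
      rw [mul_assoc, ← comm, ← mul_assoc, hΓ2, one_mul]
    obtain ⟨c, hc⟩ := hcentral _ hmem hz hΓinv
    exact ⟨c, by rw [hsq, hc]⟩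
  -- the scalar is real and nonnegative
  have keyR : ∀ a : H →L[ℂ] H, IsSelfAdjoint a → ∀ c : ℂ, a * a = c • 1 →
      ∃ r : ℝ, 0 ≤ r ∧ c = (r : ℂ) := by
    intro a hsa c h
    have h1 : (inner ℂ v ((a * a) v) : ℂ) = inner ℂ (a v) (a v) :=
      (hsa.isSymmetric v (a v)).symm
    have h2 : (inner ℂ v ((c • (1 : H →L[ℂ] H)) v) : ℂ) = c * (‖v‖ : ℂ) ^ 2 := by
      simp [inner_smul_right, inner_self_eq_norm_sq_to_K]
    have h3 : c * (‖v‖ : ℂ) ^ 2 = (‖a v‖ : ℂ) ^ 2 := by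
      rw [← h2, ← h, h1, inner_self_eq_norm_sq_to_K]
      norm_cast
    refine ⟨‖a v‖ ^ 2 / ‖v‖ ^ 2, by positivity, ?_⟩
    have hvn : ((‖v‖ : ℂ)) ^ 2 ≠ 0 :=
      pow_ne_zero _ (Complex.ofReal_ne_zero.mpr (norm_ne_zero_iff.mpr hv0))
    push_cast
    rw [eq_div_iff hvn]
    exact h3
  -- a self-adjoint operator with zero square is zero
  have keyZ : ∀ a : H →L[ℂ] H, IsSelfAdjoint a → a * a = 0 → a = 0 := by
    intro a hsa h
    ext w
    have h1 : (inner ℂ (a w) (a w) : ℂ) = 0 := by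
      have h2 : (inner ℂ w ((a * a) w) : ℂ) = 0 := by rw [h]; simp
      rw [ContinuousLinearMap.mul_apply] at h2
      calc (inner ℂ (a w) (a w) : ℂ) = inner ℂ w (a (a w)) := hsa.isSymmetric w (a w)
        _ = 0 := h2
    simpa using inner_self_eq_zero.mp h1
  -- star-closure of M ∩ M′Γ
  have Pstar : ∀ a x' : H →L[ℂ] H, a ∈ M → (∀ y ∈ M, x' * y = y * x') → a = x' * Γ →
      star a ∈ M ∧ (∀ y ∈ M, (Γ * star x' * Γ) * y = y * (Γ * star x' * Γ)) ∧
        star a = (Γ * star x' * Γ) * Γ := by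
    intro a x' haM hx' haΓ
    refine ⟨star_mem haM, CΓΓ _ (Cstar _ hx'), ?_⟩
    rw [haΓ, star_mul, hΓsa.star_eq]
    calc Γ * star x' = (Γ * star x') * (Γ * Γ) := by rw [hΓ2, mul_one]
      _ = (Γ * star x' * Γ) * Γ := by simp only [mul_assoc]
  -- obtain a nonzero self-adjoint element of M ∩ M′Γ
  obtain ⟨a1, x1, ha1M, hx1, ha1Γ, hsa1, hne1⟩ :
      ∃ a1 x1 : H →L[ℂ] H, a1 ∈ M ∧ (∀ y ∈ M, x1 * y = y * x1) ∧ a1 = x1 * Γ ∧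
        IsSelfAdjoint a1 ∧ a1 ≠ 0 := by
    obtain ⟨hsM, hCs, hsΓ⟩ := Pstar a0 x0 ha0M hx0 ha0Γ
    by_cases h : a0 + star a0 = 0
    · refine ⟨Complex.I • (a0 - star a0), Complex.I • (x0 - Γ * star x0 * Γ),
        smulMem _ _ (sub_mem ha0M hsM), ?_, ?_, ?_, ?_⟩
      · intro y hy
        rw [smul_mul_assoc, mul_smul_comm]
        congr 1
        rw [sub_mul, mul_sub, hx0 y hy, hCs y hy]
      · rw [smul_mul_assoc, sub_mul, ← ha0Γ, ← hsΓ]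
      · show star _ = _
        rw [star_smul, star_sub, star_star]
        simp only [Complex.star_def, Complex.conj_I, neg_smul, smul_sub, neg_sub]
        abel
      · intro h2
        apply ha0ne
        have h3 : a0 - star a0 = 0 := by
          have := congrArg (fun u => (-Complex.I) • u) h2
          simpa [smul_smul, Complex.I_mul_I] using this
        have h4 : (2 : ℂ) • a0 = 0 := by
          have : (a0 + star a0) + (a0 - star a0) = 0 := by rw [h, h3, add_zero]
          calc (2 : ℂ) • a0 = (a0 + star a0) + (a0 - star a0) := by
                rw [two_smul]; abel
            _ = 0 := this
        have := congrArg (fun u => ((2 : ℂ)⁻¹) • u) h4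
        simpa [smul_smul] using this
    · refine ⟨a0 + star a0, x0 + Γ * star x0 * Γ, add_mem ha0M hsM, ?_, ?_, ?_, h⟩
      · intro y hy
        rw [add_mul, mul_add, hx0 y hy, hCs y hy]
      · rw [add_mul, ← ha0Γ, ← hsΓ]
      · show star _ = _
        rw [star_add, star_star, add_comm]
  -- square of a1 is a positive scalar
  obtain ⟨c1, hc1⟩ := keyL a1 x1 ha1M hx1 ha1Γ hsa1
  obtain ⟨r1, hr1nn, hc1r⟩ := keyR a1 hsa1 c1 hc1
  have hr1pos : 0 < r1 := by
    rcases hr1nn.lt_or_eq with h | h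
    · exact h
    · exfalso
      apply hne1
      apply keyZ a1 hsa1
      rw [hc1, hc1r, ← h]
      simp
  -- the self-adjoint unitary b
  obtain ⟨σ, hσ⟩ : ∃ x : ℝ, x = Real.sqrt r1 := ⟨_, rfl⟩
  have hσpos : 0 < σ := by rw [hσ]; exact Real.sqrt_pos.mpr hr1pos
  have hσsq : (σ : ℂ) * (σ : ℂ) = (r1 : ℂ) := by
    rw [hσ]; norm_cast; exact Real.mul_self_sqrt hr1nn
  obtain ⟨b, hbdef⟩ : ∃ x : H →L[ℂ] H, x = ((σ⁻¹ : ℝ) : ℂ) • a1 := ⟨_, rfl⟩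
  have hbM : b ∈ M := by rw [hbdef]; exact smulMem _ _ ha1M
  have hbC : ∀ y ∈ M, (((σ⁻¹ : ℝ) : ℂ) • x1) * y = y * (((σ⁻¹ : ℝ) : ℂ) • x1) := by
    intro y hy
    rw [smul_mul_assoc, mul_smul_comm, hx1 y hy]
  have hbΓ : b = (((σ⁻¹ : ℝ) : ℂ) • x1) * Γ := by
    rw [hbdef, ha1Γ, smul_mul_assoc]
  have hbsa : IsSelfAdjoint b := by
    show star _ = _
    rw [hbdef, star_smul, hsa1.star_eq, Complex.star_def, Complex.conj_ofReal]
  have hb2 : b * b = 1 := by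
    rw [hbdef, smul_mul_assoc, mul_smul_comm, smul_smul, hc1, hc1r, smul_smul]
    have : (((σ⁻¹ : ℝ) : ℂ) * ((σ⁻¹ : ℝ) : ℂ)) * (r1 : ℂ) = 1 := by
      have hσne : (σ : ℂ) ≠ 0 := by
        norm_cast; exact hσpos.ne'
      push_cast
      field_simp
      linear_combination -hσsq
    rw [this, one_smul]
  -- membership b ∈ M ∩ M′Γ as a bundled fact
  -- central self-adjoint elements are scalars
  have keyC : ∀ t : H →L[ℂ] H, t ∈ M → (∀ y ∈ M, t * y = y * t) → IsSelfAdjoint t →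
      ∃ γ : ℂ, t = γ • (1 : H →L[ℂ] H) := by
    intro t htM hCt htsa
    have hcomm : t * b = b * t := hCt b hbM
    -- t * b belongs to M ∩ M′Γ and is self-adjoint
    have htbM : t * b ∈ M := mul_mem htM hbM
    have htbC : ∀ y ∈ M, (t * (((σ⁻¹ : ℝ) : ℂ) • x1)) * y = y * (t * (((σ⁻¹ : ℝ) : ℂ) • x1)) :=
      Cmul _ _ hCt hbC
    have htbΓ : t * b = (t * (((σ⁻¹ : ℝ) : ℂ) • x1)) * Γ := by
      rw [hbΓ, mul_assoc]
    have htbsa : IsSelfAdjoint (t * b) := by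
      show star _ = _
      rw [star_mul, hbsa.star_eq, htsa.star_eq, ← hcomm]
    obtain ⟨c, hc⟩ := keyL (t * b) _ htbM htbC htbΓ htbsa
    have hsqtb : (t * b) * (t * b) = t * t := by
      calc (t * b) * (t * b) = t * ((b * t) * b) := by simp only [mul_assoc]
        _ = t * ((t * b) * b) := by rw [← hcomm]
        _ = (t * t) * (b * b) := by simp only [mul_assoc]
        _ = t * t := by rw [hb2, mul_one]
    have ht2 : t * t = c • 1 := by rw [← hsqtb, hc]
    obtain ⟨r, hr0, hcr⟩ := keyR (t * b) htbsa c hc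
    rcases hr0.lt_or_eq with hr | hr
    · -- r > 0 : projection trick
      obtain ⟨τ, hτ⟩ : ∃ x : ℝ, x = Real.sqrt r := ⟨_, rfl⟩
      have hτpos : 0 < τ := by rw [hτ]; exact Real.sqrt_pos.mpr hr
      have hτsq : (τ : ℝ) * τ = r := by rw [hτ]; exact Real.mul_self_sqrt hr.le
      obtain ⟨α, hα⟩ : ∃ x : ℂ, x = ((1/2 : ℝ) : ℂ) := ⟨_, rfl⟩
      obtain ⟨β, hβ⟩ : ∃ x : ℂ, x = ((1/(2*τ) : ℝ) : ℂ) := ⟨_, rfl⟩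
      have hβne : β ≠ 0 := by
        rw [hβ]
        norm_cast
        positivity
      obtain ⟨p, hp⟩ : ∃ x : H →L[ℂ] H, x = α • 1 + β • t := ⟨_, rfl⟩
      have hpM : p ∈ M := by
        rw [hp]
        exact add_mem (smulMem _ _ (one_mem M)) (smulMem _ _ htM)
      have hpC : ∀ y ∈ M, p * y = y * p := by
        intro y hy
        rw [hp, add_mul, mul_add, smul_mul_assoc, smul_mul_assoc, mul_smul_comm,
          mul_smul_comm, one_mul, mul_one, hCt y hy]
      have hpsa : IsSelfAdjoint p := by
        show star _ = _
        rw [hp, star_add, star_smul, star_smul, htsa.star_eq, star_one,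
          hα, hβ, Complex.star_def, Complex.conj_ofReal, Complex.conj_ofReal]
      have ht2' : t * t = ((r : ℝ) : ℂ) • 1 := by rw [ht2, hcr]
      have hpsq : p * p = p := by
        have hτne : (τ : ℂ) ≠ 0 := by norm_cast; exact hτpos.ne'
        have ht2'' : t * t = ((τ : ℂ) * τ) • 1 := by
          rw [ht2']
          congr 1
          norm_cast
          exact hτsq.symm
        rw [hp]
        simp only [add_mul, mul_add, smul_mul_assoc, mul_smul_comm, one_mul, mul_one,
          smul_smul, ht2'']
        match_scalars
        · rw [hα, hβ]
          push_cast
          field_simp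
          ring
        · rw [hα, hβ]
          push_cast
          field_simp
          ring
      -- p * b is a self-adjoint element of M ∩ M′Γ
      have hpbM : p * b ∈ M := mul_mem hpM hbM
      have hpbC : ∀ y ∈ M, (p * (((σ⁻¹ : ℝ) : ℂ) • x1)) * y = y * (p * (((σ⁻¹ : ℝ) : ℂ) • x1)) :=
        Cmul _ _ hpC hbC
      have hpbΓ : p * b = (p * (((σ⁻¹ : ℝ) : ℂ) • x1)) * Γ := by rw [hbΓ, mul_assoc]
      have hpbsa : IsSelfAdjoint (p * b) := by
        show star _ = _
        rw [star_mul, hbsa.star_eq, hpsa.star_eq, ← hpC b hbM]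
      obtain ⟨e, he⟩ := keyL (p * b) _ hpbM hpbC hpbΓ hpbsa
      have hpe : p = e • 1 := by
        rw [← he]
        calc p = p * p := hpsq.symm
          _ = p * (p * (b * b)) := by rw [hb2, mul_one]
          _ = (p * b) * (p * b) := by
              have : p * (b * b) = (b * p) * b := by rw [← hpC b hbM, mul_assoc]
              rw [this]
              simp only [mul_assoc]
      -- t = ((e - α)/β) • 1
      refine ⟨(e - α) / β, ?_⟩
      have hβt : β • t = (e - α) • (1 : H →L[ℂ] H) := by
        have : β • t = p - α • 1 := by rw [hp]; abel
        rw [this, hpe, sub_smul]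
      have := congrArg (fun u => β⁻¹ • u) hβt
      simpa [smul_smul, inv_mul_cancel₀ hβne, div_eq_inv_mul] using this
    · -- r = 0 : t = 0
      have ht0 : t * t = 0 := by
        rw [ht2, hcr, ← hr]
        simp
      refine ⟨0, ?_⟩
      rw [keyZ t htsa ht0, zero_smul]
  -- the universal property of b
  have huniv : ∀ a, a ∈ M → (∃ x', (∀ y ∈ M, x' * y = y * x') ∧ a = x' * Γ) →
      ∃ c : ℂ, a = c • b := by
    rintro a haM ⟨x', hx', haΓ⟩
    -- s = b * a is central in M
    obtain ⟨s, hs⟩ : ∃ x : H →L[ℂ] H, x = b * a := ⟨_, rfl⟩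
    have hsM : s ∈ M := by rw [hs]; exact mul_mem hbM haM
    have hsC : ∀ y ∈ M, s * y = y * s := by
      have : s = (((σ⁻¹ : ℝ) : ℂ) • x1) * (Γ * x' * Γ) := by
        rw [hs, hbΓ, haΓ]
        simp only [mul_assoc]
      rw [this]
      exact Cmul _ _ hbC (CΓΓ _ hx')
    have hsC' : ∀ y ∈ M, star s * y = y * star s := Cstar _ hsC
    have hssM : star s ∈ M := star_mem hsM
    -- real and imaginary parts of s
    obtain ⟨γ1, hγ1⟩ := keyC (s + star s) (add_mem hsM hssM)
      (fun y hy => by rw [add_mul, mul_add, hsC y hy, hsC' y hy])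
      (by show star _ = _; rw [star_add, star_star, add_comm])
    obtain ⟨γ2, hγ2⟩ := keyC (Complex.I • (s - star s))
      (smulMem _ _ (sub_mem hsM hssM))
      (fun y hy => by
        rw [smul_mul_assoc, mul_smul_comm]
        congr 1
        rw [sub_mul, mul_sub, hsC y hy, hsC' y hy])
      (by
        show star _ = _
        rw [star_smul, star_sub, star_star]
        simp only [Complex.star_def, Complex.conj_I, neg_smul, smul_sub, neg_sub]
        abel)
    -- s is a scalar
    have h4 : s - star s = (-(Complex.I) * γ2) • (1 : H →L[ℂ] H) := by
      have := congrArg (fun u => (-Complex.I) • u) hγ2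
      simpa [smul_smul, Complex.I_mul_I, neg_mul] using this
    have h5 : (2 : ℂ) • s = (γ1 + -(Complex.I) * γ2) • (1 : H →L[ℂ] H) := by
      calc (2 : ℂ) • s = (s + star s) + (s - star s) := by rw [two_smul]; abel
        _ = γ1 • 1 + (-(Complex.I) * γ2) • 1 := by rw [hγ1, h4]
        _ = (γ1 + -(Complex.I) * γ2) • (1 : H →L[ℂ] H) := (add_smul _ _ _).symm
    have hsval : s = ((2 : ℂ)⁻¹ * (γ1 + -(Complex.I) * γ2)) • (1 : H →L[ℂ] H) := by
      have h6 := congrArg (fun u => ((2 : ℂ)⁻¹) • u) h5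
      simp only [smul_smul] at h6
      rw [show ((2 : ℂ)⁻¹ * 2) = 1 by norm_num, one_smul] at h6
      exact h6
    refine ⟨(2 : ℂ)⁻¹ * (γ1 + -(Complex.I) * γ2), ?_⟩
    calc a = (b * b) * a := by rw [hb2, one_mul]
      _ = b * s := by rw [hs, mul_assoc]
      _ = b * (((2 : ℂ)⁻¹ * (γ1 + -(Complex.I) * γ2)) • 1) := by rw [hsval]
      _ = ((2 : ℂ)⁻¹ * (γ1 + -(Complex.I) * γ2)) • b := by
          rw [mul_smul_comm, mul_one]
  refine ⟨⟨b, hbM, ⟨_, hbC, hbΓ⟩, hbsa, hb2, huniv⟩, ?_⟩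
  -- the "in particular" statement
  intro hΓM a haM ha
  have hΓP : ∃ x', (∀ y ∈ M, x' * y = y * x') ∧ Γ = x' * Γ :=
    ⟨1, fun y _ => by rw [one_mul, mul_one], (one_mul Γ).symm⟩
  obtain ⟨cΓ, hcΓ⟩ := huniv Γ hΓM hΓP
  obtain ⟨c, hc⟩ := huniv a haM ha
  have hcΓne : cΓ ≠ 0 := by
    intro h0
    rw [h0, zero_smul] at hcΓ
    have : (Γ * Γ) v = (1 : H →L[ℂ] H) v := by rw [hΓ2]
    rw [hcΓ] at this
    simp at this
    exact hv0 this.symm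
  refine ⟨c / cΓ, ?_⟩
  rw [hc, hcΓ, smul_smul]
  congr 1
  field_simp
end

section
/- Let H be a complex Hilbert space and {Bμ}_{μ∈P}, {Tμ}_{μ∈P} finite families of operators on H such that Bμ*Bν = Tμ*Tν = δ_{μν}I, Bμ Bν* = Tμ Tν* = E_{μν} where {E_{μν}} are matrix units of a finite type I factor (E_{μν}* = E_{νμ}, E_{μν}E_{λρ} = δ_{νλ}E_{μρ}, Σ_μ E_{μμ} = I), and suppose that for a self-adjoint unitary Γ, Σ_μ Bμ Γ^{|μ|} x Γ^{|μ|} Bμ* = Σ_μ Tμ Γ^{|μ|} x Γ^{|μ|} Tμ* for all x ∈ B(H). Then there exists c ∈ U(1) such that Tμ = c·Bμ for all μ ∈ P. -/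
open scoped BigOperators

open scoped InnerProductSpace

private lemma stmt14_central {H : Type*} [NormedAddCommGroup H] [InnerProductSpace ℂ H]
    (A : H →L[ℂ] H) (hA : ∀ x : H →L[ℂ] H, A * x = x * A) : ∃ c : ℂ, A = c • 1 := by
  cases subsingleton_or_nontrivial H with
  | inl h => exact ⟨0, by ext w; exact Subsingleton.elim _ _⟩
  | inr h =>
    obtain ⟨v, hv⟩ := exists_ne (0 : H)
    refine ⟨⟪v, A v⟫_ℂ / ⟪v, v⟫_ℂ, ?_⟩
    ext w
    have key := congrArg (fun f : H →L[ℂ] H => f v) (hA ((innerSL ℂ v).smulRight w))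
    simp only [ContinuousLinearMap.mul_apply, ContinuousLinearMap.smulRight_apply,
      innerSL_apply_apply, map_smul] at key
    have hvv : ⟪v, v⟫_ℂ ≠ 0 := inner_self_ne_zero.mpr hv
    simp only [ContinuousLinearMap.smul_apply, ContinuousLinearMap.one_apply]
    rw [div_eq_inv_mul, mul_smul, ← key, inv_smul_smul₀ hvv]

/-- Let `{Bμ}`, `{Tμ}` be families of isometries on a Hilbert space with
`Bμ*Bν = Tμ*Tν = δ_{μν}` and `Bμ Bν* = Tμ Tν* = E_{μν}` for a system of matrix units
`{E_{μν}}` of a finite type I factor, and let `Γ` be a self-adjoint unitary.  If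
`Σ_μ Bμ Γ^{|μ|} x Γ^{|μ|} Bμ* = Σ_μ Tμ Γ^{|μ|} x Γ^{|μ|} Tμ*` for all `x ∈ B(H)`, then
there is `c ∈ U(1)` with `Tμ = c·Bμ` for all `μ`. -/
theorem stmt14 {H : Type*} [NormedAddCommGroup H] [InnerProductSpace ℂ H] [CompleteSpace H]
    {P : Type*} [Fintype P] [DecidableEq P] (par : P → ZMod 2)
    (B T : P → H →L[ℂ] H) (E : P → P → H →L[ℂ] H) (Γ : H →L[ℂ] H)
    (hΓsa : IsSelfAdjoint Γ) (hΓ2 : Γ * Γ = 1)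
    (hB : ∀ μ ν : P, star (B μ) * B ν = if μ = ν then 1 else 0)
    (hT : ∀ μ ν : P, star (T μ) * T ν = if μ = ν then 1 else 0)
    (hBE : ∀ μ ν : P, B μ * star (B ν) = E μ ν)
    (hTE : ∀ μ ν : P, T μ * star (T ν) = E μ ν)
    (hEstar : ∀ μ ν : P, star (E μ ν) = E ν μ)
    (hEmul : ∀ μ ν lam ρ : P, E μ ν * E lam ρ = if ν = lam then E μ ρ else 0)
    (hEsum : ∑ μ : P, E μ μ = 1)
    (hρ : ∀ x : H →L[ℂ] H,
      ∑ μ : P, B μ * Γ ^ (par μ).val * x * Γ ^ (par μ).val * star (B μ) =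
      ∑ μ : P, T μ * Γ ^ (par μ).val * x * Γ ^ (par μ).val * star (T μ)) :
    ∃ c : ℂ, ‖c‖ = 1 ∧ ∀ μ : P, T μ = c • B μ := by
  cases subsingleton_or_nontrivial H with
  | inl h =>
    exact ⟨1, by simp, fun μ => by ext w; exact Subsingleton.elim _ _⟩
  | inr h =>
    obtain ⟨v, hv⟩ := exists_ne (0 : H)
    set G : P → (H →L[ℂ] H) := fun μ => Γ ^ (par μ).val with hGdef
    have hGG : ∀ μ, G μ * G μ = 1 := by
      intro μ
      show Γ ^ (par μ).val * Γ ^ (par μ).val = 1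
      rw [← pow_add, ← two_mul, pow_mul, show Γ ^ 2 = 1 by rw [sq, hΓ2], one_pow]
    have hGcancel : ∀ (μ : P) (a : H →L[ℂ] H), G μ * (G μ * a) = a := by
      intro μ a; rw [← mul_assoc, hGG, one_mul]
    -- commutation
    have hcomm : ∀ ν (y : H →L[ℂ] H),
        (star (T ν) * B ν) * y = y * (star (T ν) * B ν) := by
      intro ν y
      have e1 : star (B ν) * B ν = 1 := by rw [hB, if_pos rfl]
      have e2 : star (T ν) * T ν = 1 := by rw [hT, if_pos rfl]
      have hTcancel : ∀ a : H →L[ℂ] H, star (T ν) * (T ν * a) = a := by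
        intro a; rw [← mul_assoc, e2, one_mul]
      have hx := congrArg (fun z => star (T ν) * z * B ν) (hρ (G ν * y * G ν))
      simp only [show ∀ μ, Γ ^ (par μ).val = G μ from fun _ => rfl, Finset.mul_sum, Finset.sum_mul] at hx
      rw [Finset.sum_eq_single ν, Finset.sum_eq_single ν] at hx
      · simp only [mul_assoc] at hx ⊢
        simp only [e1, e2, hGG, hGcancel, hTcancel, mul_one, one_mul] at hx
        exact hx
      · intro μ _ hμν
        have hd : star (T μ) * B ν = 0 := by
          have h1 : star (T μ) * E μ μ = star (T μ) := by
            rw [← hTE, ← mul_assoc, hT, if_pos rfl, one_mul]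
          rw [← h1, ← hBE, mul_assoc, mul_assoc, hB, if_neg hμν, mul_zero, mul_zero]
        simp only [mul_assoc, hd, mul_zero]
      · intro h'; exact absurd (Finset.mem_univ ν) h'
      · intro μ _ hμν
        have hd : star (B μ) * B ν = 0 := by rw [hB, if_neg hμν]
        simp only [mul_assoc, hd, mul_zero]
      · intro h'; exact absurd (Finset.mem_univ ν) h'
    have hsc : ∀ ν, ∃ c : ℂ, star (T ν) * B ν = c • 1 :=
      fun ν => stmt14_central _ (hcomm ν)
    choose c hc using hsc
    cases isEmpty_or_nonempty P with
    | inl hP =>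
      exfalso
      have h0 : (0 : H →L[ℂ] H) = 1 := by rw [← hEsum]; simp
      have := congrArg (fun f : H →L[ℂ] H => f v) h0
      simp at this
      exact hv this.symm
    | inr hP =>
      set ν₀ := Classical.arbitrary P with hν₀
      have smul_one_inj : ∀ a b : ℂ, a • (1 : H →L[ℂ] H) = b • 1 → a = b := by
        intro a b hab
        have := congrArg (fun f : H →L[ℂ] H => f v) hab
        simp only [ContinuousLinearMap.smul_apply, ContinuousLinearMap.one_apply] at this
        exact smul_left_injective ℂ hv this
      have hcc : ∀ μ, c μ = c ν₀ := by
        intro μ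
        have hTμcancel : ∀ a : H →L[ℂ] H, star (T μ) * (T μ * a) = a := by
          intro a; rw [← mul_assoc, hT, if_pos rfl, one_mul]
        have e1 : star (T μ) * (E μ ν₀ * B ν₀) = star (T ν₀) * B ν₀ := by
          rw [← hTE μ ν₀]
          simp only [mul_assoc]
          rw [hTμcancel]
        have e2 : star (T μ) * (E μ ν₀ * B ν₀) = star (T μ) * B μ := by
          rw [← hBE, mul_assoc, hB, if_pos rfl, mul_one]
        have := e2.symm.trans e1
        rw [hc, hc] at this
        exact smul_one_inj _ _ this
      have habs : ‖c ν₀‖ = 1 := by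
        have h3 : T ν₀ * (star (T ν₀) * B ν₀) = B ν₀ := by
          rw [← mul_assoc, hTE, ← hBE, mul_assoc, hB, if_pos rfl, mul_one]
        have hAA : star (star (T ν₀) * B ν₀) * (star (T ν₀) * B ν₀) = 1 := by
          rw [star_mul, star_star, mul_assoc, h3, hB, if_pos rfl]
        rw [hc, star_smul, star_one, smul_mul_smul_comm, one_mul] at hAA
        have h1 : (starRingEnd ℂ) (c ν₀) * c ν₀ = 1 := by
          have := smul_one_inj _ 1 (by rw [hAA, one_smul])
          simpa using this
        have h2 : ‖c ν₀‖ ^ 2 = 1 := by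
          have := congrArg (‖·‖) h1
          rwa [norm_mul, norm_one, Complex.norm_conj, ← sq] at this
        nlinarith [norm_nonneg (c ν₀)]
      refine ⟨starRingEnd ℂ (c ν₀), by rw [Complex.norm_conj]; exact habs, ?_⟩
      intro μ
      have hstar : star (B μ) * T μ = starRingEnd ℂ (c ν₀) • 1 := by
        have := congrArg star (hc μ)
        rw [star_mul, star_star, star_smul, star_one, hcc μ] at this
        simpa using this
      have hTid : T μ = B μ * (star (B μ) * T μ) := by
        rw [← mul_assoc, hBE, ← hTE, mul_assoc, hT, if_pos rfl, mul_one]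
      rw [hTid, hstar, mul_smul_comm, mul_one]
end
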